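/- Consider a network congestion game with N players and a finite set E of links, where each player i chooses a path x_i (a finite subset of E) from a common finite collection P of paths, each link e ∈ E has a cost function C_e : ℕ → ℝ, the congestion of link e under profile x = (x_1,…,x_N) is v_e(x) = |{ j : e ∈ x_j }|, and player i's cost is f_i(x) = Σ_{e ∈ x_i} C_e(v_e(x)). Then the function φ(x) = Σ_{e ∈ E} Σ_{k=1}^{v_e(x)} C_e(k) is an exact potential function: for every player i, every two paths x_i, x'_i ∈ P, and every profile x_{-i} of the other players, f_i(x'_i, x_{-i}) − f_i(x_i, x_{-i}) = φ(x'_i, x_{-i}) − φ(x_i, x_{-i}). -/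

import Mathlib

noncomputable section

/-- The congestion `v_e(x)` of link `e`: the number of players whose path contains `e`. -/
def congestion {N : ℕ} {E : Type*} [Fintype E] [DecidableEq E]
    (x : Fin N → Finset E) (e : E) : ℕ :=
  (Finset.univ.filter fun j => e ∈ x j).card

/-- Player `i`'s cost in the network congestion game:
`f_i(x) = ∑_{e ∈ x_i} C_e(v_e(x))`. -/
def congestionCost {N : ℕ} {E : Type*} [Fintype E] [DecidableEq E]
    (C : E → ℕ → ℝ) (i : Fin N) (x : Fin N → Finset E) : ℝ :=
  ∑ e ∈ x i, C e (congestion x e)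

/-- Rosenthal's potential `φ(x) = ∑_{e ∈ E} ∑_{k=1}^{v_e(x)} C_e(k)`. -/
def rosenthalPot {N : ℕ} {E : Type*} [Fintype E] [DecidableEq E]
    (C : E → ℕ → ℝ) (x : Fin N → Finset E) : ℝ :=
  ∑ e : E, ∑ k ∈ Finset.Icc 1 (congestion x e), C e k

lemma congestion_split {N : ℕ} {E : Type*} [Fintype E] [DecidableEq E]
    (x : Fin N → Finset E) (i : Fin N) (e : E) :
    congestion x e = ((Finset.univ.erase i).filter fun j => e ∈ x j).card
      + (if e ∈ x i then 1 else 0) := by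
  unfold congestion
  rw [Finset.card_filter, Finset.card_filter,
    ← Finset.sum_erase_add _ _ (Finset.mem_univ i)]

lemma congestion_update {N : ℕ} {E : Type*} [Fintype E] [DecidableEq E]
    (x : Fin N → Finset E) (i : Fin N) (xi' : Finset E) (e : E) :
    congestion (Function.update x i xi') e
      = ((Finset.univ.erase i).filter fun j => e ∈ x j).card
        + (if e ∈ xi' then 1 else 0) := by
  rw [congestion_split _ i e, Function.update_self]
  congr 2
  apply Finset.filter_congr
  intro j hj
  rw [Function.update_of_ne (Finset.mem_erase.mp hj).1]

lemma per_edge {N : ℕ} {E : Type*} [Fintype E] [DecidableEq E]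
    (C : E → ℕ → ℝ) (x : Fin N → Finset E) (i : Fin N) (xi' : Finset E) (e : E) :
    (∑ k ∈ Finset.Icc 1 (congestion (Function.update x i xi') e), C e k)
      - ∑ k ∈ Finset.Icc 1 (congestion x e), C e k
    = (if e ∈ xi' then C e (congestion (Function.update x i xi') e) else 0)
      - (if e ∈ x i then C e (congestion x e) else 0) := by
  set m := ((Finset.univ.erase i).filter fun j => e ∈ x j).card with hm
  have h1 := congestion_split x i e
  have h2 := congestion_update x i xi' e
  by_cases ha : e ∈ xi' <;> by_cases hb : e ∈ x i <;>
      simp [ha, hb] at h1 h2 ⊢ <;> rw [h1, h2]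
  · ring
  · rw [Finset.sum_Icc_succ_top (Nat.le_add_left 1 m)]; ring
  · rw [Finset.sum_Icc_succ_top (Nat.le_add_left 1 m)]; ring
  · ring

theorem stmt18 {N : ℕ} {E : Type*} [Fintype E] [DecidableEq E]
    (P : Finset (Finset E)) (C : E → ℕ → ℝ) :
    ∀ (i : Fin N) (x : Fin N → Finset E), (∀ j, x j ∈ P) → ∀ xi' ∈ P,
      congestionCost C i (Function.update x i xi') - congestionCost C i x
        = rosenthalPot C (Function.update x i xi') - rosenthalPot C x := by
  intro i x _ xi' _
  have hc : ∀ (y : Fin N → Finset E),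
      congestionCost C i y = ∑ e : E, if e ∈ y i then C e (congestion y e) else 0 := by
    intro y
    rw [congestionCost, Finset.sum_ite_mem, Finset.univ_inter]
  rw [hc, hc, rosenthalPot, rosenthalPot, ← Finset.sum_sub_distrib,
    ← Finset.sum_sub_distrib]
  apply Finset.sum_congr rfl
  intro e _
  rw [per_edge C x i xi' e, Function.update_self]
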